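/- Let a > 0 and E ≠ 0 be real constants, and define r(t) = (1/(2a))(1 − E²/cosh²(at)) for t ∈ ℝ. Then: (i) r satisfies the coordinate-time geodesic equation r''(t) = −2a(1 − 2a·r(t))·[1 − (3/(2E²))(1 − 2a·r(t))] for all t ∈ ℝ; and (ii) for all t > 0, the confinement bounds −E² + 1 < 2a·r(t) < 1 hold, so the particle remains confined for all 0 < t < ∞. -/

import Mathlib

/-- With `a > 0`, `E ≠ 0` and
`r(t) = (1/(2a))(1 − E²/cosh²(at))`:
(i) `r'' (t) = −2a(1 − 2a·r)[1 − (3/(2E²))(1 − 2a·r)]` for all `t`;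
(ii) for all `t > 0` the confinement bounds `−E² + 1 < 2a·r(t) < 1` hold. -/
theorem stmt_14 (a E : ℝ) (ha : 0 < a) (hE : E ≠ 0)
    (r : ℝ → ℝ)
    (hr : r = fun t => (1 / (2 * a)) * (1 - E ^ 2 / (Real.cosh (a * t)) ^ 2)) :
    (∀ t : ℝ,
      deriv (deriv r) t
        = -2 * a * (1 - 2 * a * r t)
            * (1 - (3 / (2 * E ^ 2)) * (1 - 2 * a * r t))) ∧
    (∀ t : ℝ, 0 < t → -E ^ 2 + 1 < 2 * a * r t ∧ 2 * a * r t < 1) := by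
  have hE2 : (0:ℝ) < E ^ 2 := by positivity
  have hcosh : ∀ t : ℝ, HasDerivAt (fun t : ℝ => Real.cosh (a * t))
      (Real.sinh (a * t) * a) t := fun t => by
    have := (Real.hasDerivAt_cosh (a * t)).comp t ((hasDerivAt_id t).const_mul a)
    simpa [Function.comp_def] using this
  have key : ∀ t : ℝ, HasDerivAt r (E ^ 2 * Real.sinh (a * t) / Real.cosh (a * t) ^ 3) t := by
    intro t
    have hc : Real.cosh (a * t) ≠ 0 := ne_of_gt (Real.cosh_pos _)
    have h2 : HasDerivAt (fun t : ℝ => Real.cosh (a * t) ^ 2)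
        (2 * Real.cosh (a * t) ^ 1 * (Real.sinh (a * t) * a)) t := (hcosh t).pow 2
    have h3 : HasDerivAt (fun t : ℝ => E ^ 2 / Real.cosh (a * t) ^ 2)
        ((0 * Real.cosh (a * t) ^ 2 - E ^ 2 * (2 * Real.cosh (a * t) ^ 1 * (Real.sinh (a * t) * a)))
          / (Real.cosh (a * t) ^ 2) ^ 2) t :=
      (hasDerivAt_const t (E ^ 2)).div h2 (pow_ne_zero _ hc)
    have h4 := ((hasDerivAt_const t (1:ℝ)).sub h3).const_mul (1 / (2 * a))
    rw [hr]
    refine h4.congr_deriv ?_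
    have hc2 : Real.cosh (a * t) ^ 2 ≠ 0 := pow_ne_zero _ hc
    field_simp
    ring
  have hderiv : deriv r = fun t => E ^ 2 * Real.sinh (a * t) / Real.cosh (a * t) ^ 3 :=
    funext fun t => (key t).deriv
  constructor
  · intro t
    have hc : Real.cosh (a * t) ≠ 0 := ne_of_gt (Real.cosh_pos _)
    have hnum : HasDerivAt (fun t : ℝ => E ^ 2 * Real.sinh (a * t))
        (E ^ 2 * (Real.cosh (a * t) * a)) t := by
      have := ((Real.hasDerivAt_sinh (a * t)).comp t ((hasDerivAt_id t).const_mul a)).const_mul (E ^ 2)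
      simpa [mul_comm, mul_assoc] using this
    have hden : HasDerivAt (fun t : ℝ => Real.cosh (a * t) ^ 3)
        (3 * Real.cosh (a * t) ^ 2 * (Real.sinh (a * t) * a)) t := (hcosh t).pow 3
    have h5 : HasDerivAt (deriv r)
        ((E ^ 2 * (Real.cosh (a * t) * a) * Real.cosh (a * t) ^ 3
          - E ^ 2 * Real.sinh (a * t) * (3 * Real.cosh (a * t) ^ 2 * (Real.sinh (a * t) * a)))
          / (Real.cosh (a * t) ^ 3) ^ 2) t := by
      rw [hderiv]
      exact hnum.div hden (pow_ne_zero _ hc)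
    rw [h5.deriv, hr]
    have hid : Real.cosh (a * t) ^ 2 - Real.sinh (a * t) ^ 2 = 1 := Real.cosh_sq_sub_sinh_sq _
    have hs : Real.sinh (a * t) ^ 2 = Real.cosh (a * t) ^ 2 - 1 := by linarith
    field_simp
    linear_combination (3 * E ^ 4) * hid
  · intro t ht
    have h1 : (1:ℝ) < Real.cosh (a * t) := by
      have := Real.one_lt_cosh.mpr (ne_of_gt (mul_pos ha ht))
      simpa using this
    have hc2 : (1:ℝ) < Real.cosh (a * t) ^ 2 := by nlinarith
    have hpos : 0 < E ^ 2 / Real.cosh (a * t) ^ 2 := by positivity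
    have hlt : E ^ 2 / Real.cosh (a * t) ^ 2 < E ^ 2 := by
      rw [div_lt_iff₀ (by linarith)]
      nlinarith
    have hrt : 2 * a * r t = 1 - E ^ 2 / Real.cosh (a * t) ^ 2 := by
      rw [hr]
      field_simp
    rw [hrt]
    constructor <;> linarith
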